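/- Let X be a finite set and K an X × X Hermitian matrix. If there exists a point process on subsets of X whose correlation functions are ρ_n(x_1,...,x_n) = det[K(x_i,x_j)] (in particular all these determinants and all resulting probabilities are nonnegative), then 0 ≤ K ≤ 1, i.e. both K and 1 − K are positive semidefinite. -/

import Mathlib

open scoped ComplexOrder

/-- det of the matrix equal to `A` on rows in `s` and to the identity on other rows is the
principal minor of `A` on `s`. -/
private lemma det_piecewise_single {n : Type*} [Fintype n] [DecidableEq n]
    (A : Matrix n n ℂ) (s : Finset n) :
    (Matrix.of (s.piecewise (fun i => A i) (fun i => (Pi.single i (1:ℂ) : n → ℂ)))).det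
      = (A.submatrix (fun i : ↥s => (i : n)) (fun i : ↥s => (i : n))).det := by
  rw [← Matrix.det_submatrix_equiv_self (Equiv.sumCompl (· ∈ s))]
  have hb : (Matrix.of (s.piecewise (fun i => A i) (fun i => (Pi.single i (1:ℂ) : n → ℂ)))).submatrix
      (Equiv.sumCompl (· ∈ s)) (Equiv.sumCompl (· ∈ s)) =
      Matrix.fromBlocks (A.submatrix (fun i : ↥s => (i : n)) (fun i : ↥s => (i : n)))
        (A.submatrix (fun i : {a // a ∈ s} => (i : n)) (fun i : {a // ¬ a ∈ s} => (i : n)))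
        0 1 := by
    ext i j
    cases i with
    | inl i =>
      cases j with
      | inl j => simp [Finset.piecewise_eq_of_mem _ _ _ i.2]
      | inr j => simp [Finset.piecewise_eq_of_mem _ _ _ i.2]
    | inr i =>
      cases j with
      | inl j =>
        have hne : (j : n) ≠ (i : n) := fun h => i.2 (h ▸ j.2)
        simp [Finset.piecewise_eq_of_notMem _ _ _ i.2, Pi.single_apply, hne]
      | inr j =>
        simp [Finset.piecewise_eq_of_notMem _ _ _ i.2, Pi.single_apply, Matrix.one_apply,
          Subtype.ext_iff, eq_comm]
  rw [hb, Matrix.det_fromBlocks_zero₂₁, Matrix.det_one, mul_one]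

/-- Expansion of `det (A + t • 1)` as a sum over principal minors of `A`. -/
private lemma det_add_smul_one {n : Type*} [Fintype n] [DecidableEq n]
    (A : Matrix n n ℂ) (t : ℂ) :
    (A + t • 1).det = ∑ s : Finset n, t ^ sᶜ.card *
      (A.submatrix (fun i : ↥s => (i : n)) (fun i : ↥s => (i : n))).det := by
  have h1 : A + t • 1 = Matrix.of ((fun i => A i) + fun i => t • (Pi.single i (1:ℂ) : n → ℂ)) := by
    ext i j
    simp only [Matrix.add_apply, Matrix.smul_apply, Matrix.one_apply, Pi.add_apply,
      Pi.smul_apply, Pi.single_apply, smul_eq_mul, mul_ite, mul_one, mul_zero, Matrix.of_apply]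
    congr 1
    simp [eq_comm]
  rw [h1]
  have key := (Matrix.detRowAlternating (n := n) (R := ℂ)).toMultilinearMap.map_add_univ
      (fun i => A i) (fun i => t • (Pi.single i (1:ℂ) : n → ℂ))
  rw [show (Matrix.of ((fun i => A i) + fun i => t • (Pi.single i (1:ℂ) : n → ℂ))).det
      = ∑ s : Finset n, (Matrix.detRowAlternating (n := n) (R := ℂ)).toMultilinearMap
          (s.piecewise (fun i => A i) fun i => t • (Pi.single i (1:ℂ) : n → ℂ)) from key]
  refine Finset.sum_congr rfl fun s _ => ?_
  have h2 : (s.piecewise (fun i => A i) fun i => t • (Pi.single i (1:ℂ) : n → ℂ))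
      = sᶜ.piecewise (fun i => t • (s.piecewise (fun i => A i) (fun i => (Pi.single i (1:ℂ) : n → ℂ))) i)
          (s.piecewise (fun i => A i) (fun i => (Pi.single i (1:ℂ) : n → ℂ))) := by
    funext i
    by_cases h : i ∈ s <;>
      simp [Finset.piecewise_eq_of_mem, Finset.piecewise_eq_of_notMem, h]
  rw [h2, (Matrix.detRowAlternating (n := n) (R := ℂ)).toMultilinearMap.map_piecewise_smul
    (fun _ => t) _ sᶜ, Finset.prod_const, smul_eq_mul]
  exact congrArg (t ^ sᶜ.card * ·) (det_piecewise_single A s)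

/-- A Hermitian matrix all of whose principal minors are nonnegative is positive semidefinite. -/
private lemma posSemidef_of_minors {X : Type*} [Fintype X] [DecidableEq X]
    {A : Matrix X X ℂ} (hA : A.IsHermitian)
    (h : ∀ T : Finset X, 0 ≤ (A.submatrix (fun i : ↥T => (i : X)) (fun i : ↥T => (i : X))).det) :
    A.PosSemidef := by
  refine hA.posSemidef_iff_eigenvalues_nonneg.mpr fun i => show (0:ℝ) ≤ hA.eigenvalues i from ?_
  by_contra hneg
  push_neg at hneg
  set t : ℝ := -hA.eigenvalues i with ht
  have ht0 : 0 < t := by simp only [ht]; linarith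
  have hdet : (A + (t : ℂ) • 1).det = 0 := by
    rw [← Matrix.exists_mulVec_eq_zero_iff]
    refine ⟨⇑(hA.eigenvectorBasis i), ?_, ?_⟩
    · intro hzero
      exact hA.eigenvectorBasis.orthonormal.ne_zero i (by ext x; exact congrFun hzero x)
    · rw [Matrix.add_mulVec, hA.mulVec_eigenvectorBasis, Matrix.smul_mulVec,
        Matrix.one_mulVec]
      funext x
      simp only [Pi.add_apply, Pi.smul_apply, Pi.zero_apply, smul_eq_mul, Complex.real_smul]
      push_cast [ht]
      ring
  rw [det_add_smul_one] at hdet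
  have hnonneg : ∀ s ∈ (Finset.univ : Finset (Finset X)), 0 ≤ (t : ℂ) ^ sᶜ.card *
      (A.submatrix (fun i : ↥s => (i : X)) (fun i : ↥s => (i : X))).det := by
    intro s _
    refine mul_nonneg ?_ (h s)
    rw [show ((t : ℂ) ^ sᶜ.card) = ((t ^ sᶜ.card : ℝ) : ℂ) by push_cast; ring]
    exact_mod_cast Complex.zero_le_real.mpr (pow_nonneg ht0.le _)
  have hterm := (Finset.sum_eq_zero_iff_of_nonneg hnonneg).mp hdet (∅ : Finset X)
    (Finset.mem_univ _)
  haveI : IsEmpty ↥(∅ : Finset X) := ⟨fun x => absurd x.2 (Finset.notMem_empty _)⟩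
  rw [Matrix.det_isEmpty, mul_one] at hterm
  exact pow_ne_zero _ (by exact_mod_cast ht0.ne') hterm

private lemma det_submatrix_eq_sum {X : Type*} [Fintype X] [DecidableEq X]
    (K : Matrix X X ℂ) (p : Finset X → ℝ)
    (hcorr : ∀ (n : ℕ) (a : Fin n → X), Function.Injective a →
      (↑(∑ S ∈ Finset.univ.filter (fun S : Finset X => ∀ i, a i ∈ S), p S) : ℂ)
        = Matrix.det (Matrix.of fun i j : Fin n => K (a i) (a j)))
    {m : Type*} [Fintype m] [DecidableEq m] (b : m → X) (hb : Function.Injective b) :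
    (K.submatrix b b).det
      = (↑(∑ S ∈ Finset.univ.filter (fun S : Finset X => ∀ i, b i ∈ S), p S) : ℂ) := by
  classical
  set e : Fin (Fintype.card m) ≃ m := (Fintype.equivFin m).symm with he
  have ha : Function.Injective (b ∘ e) := hb.comp e.injective
  have h := hcorr (Fintype.card m) (b ∘ e) ha
  have hfil : (Finset.univ.filter fun S : Finset X => ∀ i, (b ∘ e) i ∈ S)
      = Finset.univ.filter fun S : Finset X => ∀ i, b i ∈ S := by
    apply Finset.filter_congr
    intro S _
    exact ⟨fun hs i => by simpa using hs (e.symm i), fun hs i => hs (e i)⟩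
  rw [hfil] at h
  rw [← Matrix.det_submatrix_equiv_self e (K.submatrix b b)]
  exact h.symm

/-- Macchi–Soshnikov, 'only if' direction, finite case: if a Hermitian matrix
`K` on a finite set `X` is the correlation kernel of a (genuine, probability) point process
on subsets of `X`, then `0 ≤ K ≤ 1`, i.e. both `K` and `1 − K` are positive semidefinite. -/
theorem determinantal_kernel_le_one {X : Type*} [Fintype X] [DecidableEq X]
    (K : Matrix X X ℂ) (hK : K.IsHermitian)
    (p : Finset X → ℝ) (hp0 : ∀ S, 0 ≤ p S) (hp1 : ∑ S : Finset X, p S = 1)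
    (hcorr : ∀ (n : ℕ) (a : Fin n → X), Function.Injective a →
      (↑(∑ S ∈ Finset.univ.filter (fun S : Finset X => ∀ i, a i ∈ S), p S) : ℂ)
        = Matrix.det (Matrix.of fun i j : Fin n => K (a i) (a j))) :
    K.PosSemidef ∧ (1 - K).PosSemidef := by
  classical
  have hKdet : ∀ T : Finset X,
      0 ≤ (K.submatrix (fun i : ↥T => (i : X)) (fun i : ↥T => (i : X))).det := by
    intro T
    rw [det_submatrix_eq_sum K p hcorr _ (fun i j hij => Subtype.ext hij)]
    exact Complex.zero_le_real.mpr (Finset.sum_nonneg fun S _ => hp0 S)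
  refine ⟨posSemidef_of_minors hK hKdet, posSemidef_of_minors (Matrix.isHermitian_one.sub hK) ?_⟩
  intro T
  have hmat : (1 - K).submatrix (fun i : ↥T => (i : X)) (fun i : ↥T => (i : X))
      = (-K).submatrix (fun i : ↥T => (i : X)) (fun i : ↥T => (i : X))
        + (1 : ℂ) • (1 : Matrix ↥T ↥T ℂ) := by
    ext i j
    by_cases hij : i = j
    · simp [Matrix.one_apply, hij, sub_eq_neg_add]
    · have hne : (i : X) ≠ (j : X) := fun h => hij (Subtype.ext h)
      simp [Matrix.one_apply, hij, hne, sub_eq_neg_add]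
  rw [hmat, det_add_smul_one]
  -- rewrite each principal minor of `-K` via the correlation functions
  have hterm : ∀ s : Finset ↥T,
      (((-K).submatrix (fun i : ↥T => (i : X)) (fun i : ↥T => (i : X))).submatrix
        (fun i : ↥s => (i : ↥T)) (fun i : ↥s => (i : ↥T))).det
      = (-1 : ℂ) ^ s.card *
        ↑(∑ S ∈ Finset.univ.filter
            (fun S : Finset X => ∀ i : ↥s, ((i : ↥T) : X) ∈ S), p S) := by
    intro s
    have hneg : (((-K).submatrix (fun i : ↥T => (i : X)) (fun i : ↥T => (i : X))).submatrix
          (fun i : ↥s => (i : ↥T)) (fun i : ↥s => (i : ↥T)))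
        = -(K.submatrix (fun i : ↥s => ((i : ↥T) : X)) (fun i : ↥s => ((i : ↥T) : X))) := rfl
    rw [hneg, Matrix.det_neg, det_submatrix_eq_sum K p hcorr _
      (fun i j hij => Subtype.ext (Subtype.ext hij)), Fintype.card_coe]
  simp only [one_pow, one_mul, hterm]
  -- inclusion–exclusion: swap the two sums
  have hswap : (∑ s : Finset ↥T, (-1 : ℂ) ^ s.card *
      ↑(∑ S ∈ Finset.univ.filter
          (fun S : Finset X => ∀ i : ↥s, ((i : ↥T) : X) ∈ S), p S))
      = ∑ S : Finset X, (if (Finset.univ.filter fun i : ↥T => (i : X) ∈ S) = ∅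
          then ((p S : ℂ)) else 0) := by
    have h1 : ∀ s : Finset ↥T,
        (↑(∑ S ∈ Finset.univ.filter
            (fun S : Finset X => ∀ i : ↥s, ((i : ↥T) : X) ∈ S), p S) : ℂ)
        = ∑ S : Finset X, (if (∀ i : ↥s, ((i : ↥T) : X) ∈ S) then (p S : ℂ) else 0) := by
      intro s
      rw [Finset.sum_filter]
      push_cast [apply_ite (fun r : ℝ => (r : ℂ))]
      rfl
    simp only [h1, Finset.mul_sum]
    rw [Finset.sum_comm]
    refine Finset.sum_congr rfl fun S _ => ?_
    have h2 : ∀ s : Finset ↥T,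
        ((-1 : ℂ) ^ s.card * if (∀ i : ↥s, ((i : ↥T) : X) ∈ S) then (p S : ℂ) else 0)
        = if s ⊆ (Finset.univ.filter fun i : ↥T => (i : X) ∈ S)
            then (-1 : ℂ) ^ s.card * (p S : ℂ) else 0 := by
      intro s
      have : (∀ i : ↥s, ((i : ↥T) : X) ∈ S)
          ↔ s ⊆ (Finset.univ.filter fun i : ↥T => (i : X) ∈ S) := by
        simp [Finset.subset_iff]
      rw [mul_ite, mul_zero]
      simp only [this]
    simp only [h2]
    rw [← Finset.sum_filter]
    have h3 : (Finset.univ.filter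
          fun s : Finset ↥T => s ⊆ (Finset.univ.filter fun i : ↥T => (i : X) ∈ S))
        = (Finset.univ.filter fun i : ↥T => (i : X) ∈ S).powerset := by
      ext s
      rw [Finset.mem_filter, Finset.mem_powerset]
      exact ⟨fun h => h.2, fun h => ⟨Finset.mem_univ _, h⟩⟩
    rw [h3, ← Finset.sum_mul]
    have h4 : (∑ s ∈ (Finset.univ.filter fun i : ↥T => (i : X) ∈ S).powerset,
        (-1 : ℂ) ^ s.card)
        = if (Finset.univ.filter fun i : ↥T => (i : X) ∈ S) = ∅ then 1 else 0 := by
      have h5 := Finset.sum_powerset_neg_one_pow_card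
        (x := (Finset.univ.filter fun i : ↥T => (i : X) ∈ S))
      have h6 := congrArg (fun z : ℤ => (z : ℂ)) h5
      push_cast [apply_ite (fun z : ℤ => (z : ℂ))] at h6
      exact h6
    rw [h4, ite_mul, one_mul, zero_mul]
  rw [hswap]
  refine Finset.sum_nonneg fun S _ => ?_
  split
  · exact Complex.zero_le_real.mpr (hp0 S)
  · exact le_refl _
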